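/- Existence of ZD strategies (necessity direction): If player j has a ZD strategy controlling B (i.e., B is a nontrivial linear combination Σ_{a_j} c_{a_j} T̂_j(a_j|a') of Press–Dyson vectors of a valid memory-one strategy, with B not identically zero), then there exist two distinct actions ā, a̲ ∈ A such that B(ā, a_{-j}) ≥ 0 for all a_{-j} and B(a̲, a_{-j}) ≤ 0 for all a_{-j}. -/
import Mathlib


open Finset

/-- Existence of ZD strategies (necessity).  If a valid memory-one strategy `T` of
player `j` with non-constant coefficients `c` controls the non-identically-zero
function `B` (`∑_x c x * T̂(x|a') = B a'` for all `a'`), then player `j` has two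
distinct actions `abar ≠ aund` such that `B ≥ 0` whenever `j` plays `abar` and
`B ≤ 0` whenever `j` plays `aund`. -/
theorem sign_actions_of_zd {n : ℕ} {A : Type} [Fintype A] [DecidableEq A]
    (j : Fin n) (B : (Fin n → A) → ℝ)
    (T : (Fin n → A) → A → ℝ)
    (hT : ∀ a', (∀ x, 0 ≤ T a' x) ∧ ∑ x, T a' x = 1)
    (c : A → ℝ) (hc : ∃ x y : A, c x ≠ c y)
    (hB : ∃ a, B a ≠ 0)
    (hZD : ∀ a' : Fin n → A,
      ∑ x, c x * (T a' x - (if x = a' j then 1 else 0)) = B a') :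
    ∃ abar aund : A, abar ≠ aund ∧
      (∀ a : Fin n → A, a j = abar → 0 ≤ B a) ∧
      (∀ a : Fin n → A, a j = aund → B a ≤ 0) := by
  obtain ⟨x0, y0, hxy⟩ := hc
  have hne : (Finset.univ : Finset A).Nonempty := ⟨x0, Finset.mem_univ x0⟩
  obtain ⟨abar, -, hmin⟩ := Finset.exists_min_image Finset.univ c hne
  obtain ⟨aund, -, hmax⟩ := Finset.exists_max_image Finset.univ c hne
  have key : ∀ a : Fin n → A, B a = ∑ x, c x * T a x - c (a j) := by
    intro a
    rw [← hZD a]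
    simp [mul_sub, Finset.sum_sub_distrib, mul_ite, mul_one, mul_zero]
  have hnea : abar ≠ aund := by
    intro h
    apply hxy
    have h1 : c abar ≤ c x0 := hmin x0 (Finset.mem_univ x0)
    have h2 : c x0 ≤ c aund := hmax x0 (Finset.mem_univ x0)
    have h3 : c abar ≤ c y0 := hmin y0 (Finset.mem_univ y0)
    have h4 : c y0 ≤ c aund := hmax y0 (Finset.mem_univ y0)
    rw [h] at h1 h3
    linarith
  refine ⟨abar, aund, hnea, ?_, ?_⟩
  · intro a ha
    rw [key a, ha, sub_nonneg]
    calc c abar = ∑ x, c abar * T a x := by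
          rw [← Finset.mul_sum, (hT a).2, mul_one]
      _ ≤ ∑ x, c x * T a x := by
          apply Finset.sum_le_sum
          intro i _
          exact mul_le_mul_of_nonneg_right (hmin i (Finset.mem_univ i)) ((hT a).1 i)
  · intro a ha
    rw [key a, ha, sub_nonpos]
    calc ∑ x, c x * T a x ≤ ∑ x, c aund * T a x := by
          apply Finset.sum_le_sum
          intro i _
          exact mul_le_mul_of_nonneg_right (hmax i (Finset.mem_univ i)) ((hT a).1 i)
      _ = c aund := by rw [← Finset.mul_sum, (hT a).2, mul_one]
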